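/- For the cyclic orderings α = (1,2,3,4,5,6) and β = (1,3,6,5,2,4) of {1,...,6}, the only 2-element set adjacent in both cyclic orders is {5,6}; after deleting 6 from both, the resulting 5-element cyclic orderings (1,2,3,4,5) and (1,3,5,2,4) share no adjacent pair; hence α and β share no common planar binary tree. -/

import Mathlib

/-- `A` is a contiguous arc of the cyclic ordering given by the list `l`. -/
def IsArc (l : List ℕ) (A : Finset ℕ) : Prop :=
  ∃ k m : ℕ, A = ((l.rotate k).take m).toFinset

/-- `T` is the split system of an unrooted binary tree with leaf set `L`:
a collection of `2(|L|-3)` subsets of `L` (the two sides of each internal edge),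
closed under complementation, with each member of size between `2` and `|L|-2`,
and pairwise compatible. -/
def IsTreeSplits (L : Finset ℕ) (T : Finset (Finset ℕ)) : Prop :=
  (∀ A ∈ T, A ⊆ L ∧ 2 ≤ A.card ∧ A.card + 2 ≤ L.card) ∧
  (∀ A ∈ T, L \ A ∈ T) ∧
  (∀ A ∈ T, ∀ B ∈ T, A ⊆ B ∨ B ⊆ A ∨ A ∩ B = ∅ ∨ L ⊆ A ∪ B) ∧
  T.card = 2 * (L.card - 3)

/-- The tree with split system `T` is planar with respect to the cyclic ordering `l`:
every split is a contiguous arc of `l`. -/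
def Planar (l : List ℕ) (T : Finset (Finset ℕ)) : Prop :=
  ∀ A ∈ T, IsArc l A

/-- `l` is a cyclic ordering of the finite set `L`. -/
def IsOrdering (L : Finset ℕ) (l : List ℕ) : Prop :=
  l.Nodup ∧ l.toFinset = L

/-- `i` and `j` are cyclically adjacent in the ordering `l`. -/
def AdjPair (l : List ℕ) (i j : ℕ) : Prop :=
  ∃ k : ℕ, (l.rotate k).take 2 = [i, j] ∨ (l.rotate k).take 2 = [j, i]

/-! ### Auxiliary machinery -/

/-- Bounded version of `AdjPair`. -/
def AdjPairB (l : List ℕ) (i j : ℕ) : Prop :=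
  ∃ k < l.length, (l.rotate k).take 2 = [i, j] ∨ (l.rotate k).take 2 = [j, i]

instance (l : List ℕ) (i j : ℕ) : Decidable (AdjPairB l i j) := by
  unfold AdjPairB; infer_instance

lemma adj_iff (l : List ℕ) (hl : l ≠ []) (i j : ℕ) : AdjPair l i j ↔ AdjPairB l i j := by
  constructor
  · rintro ⟨k, h⟩
    exact ⟨k % l.length, Nat.mod_lt _ (List.length_pos_iff.2 hl), by rwa [List.rotate_mod]⟩
  · rintro ⟨k, _, h⟩
    exact ⟨k, h⟩

lemma adj_mem (l : List ℕ) (i j : ℕ) (h : AdjPairB l i j) : i ∈ l ∧ j ∈ l := by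
  obtain ⟨k, _, h | h⟩ := h <;>
    constructor <;>
    [ (have : i ∈ (l.rotate k).take 2 := by rw [h]; simp);
      (have : j ∈ (l.rotate k).take 2 := by rw [h]; simp);
      (have : i ∈ (l.rotate k).take 2 := by rw [h]; simp);
      (have : j ∈ (l.rotate k).take 2 := by rw [h]; simp) ] <;>
    · have := List.mem_of_mem_take this
      rwa [List.mem_rotate] at this

lemma arc_bounded (l : List ℕ) (hl : l ≠ []) (A : Finset ℕ) (h : IsArc l A) :
    ∃ k < l.length, ∃ m ≤ l.length, A = ((l.rotate k).take m).toFinset := by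
  obtain ⟨k, m, rfl⟩ := h
  refine ⟨k % l.length, Nat.mod_lt _ (List.length_pos_iff.2 hl), min m l.length, min_le_right _ _, ?_⟩
  rw [List.rotate_mod]
  congr 1
  rw [List.take_eq_take_iff]
  simp [List.length_rotate, Nat.min_assoc]

set_option maxRecDepth 10000 in
lemma part1_dec : ∀ i < 7, ∀ j < 7, i ≠ j →
    (AdjPairB [1,2,3,4,5,6] i j ∧ AdjPairB [1,3,6,5,2,4] i j ↔
      (i = 5 ∧ j = 6) ∨ (i = 6 ∧ j = 5)) := by decide

set_option maxRecDepth 10000 in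
lemma part2_dec : ∀ i < 6, ∀ j < 6, i ≠ j →
    ¬ (AdjPairB [1,2,3,4,5] i j ∧ AdjPairB [1,3,5,2,4] i j) := by decide

/-- The property that a common arc of the two orderings of size between 2 and 4
must be `{5,6}` or `{1,2,3,4}`. -/
def KeyP (k m k' m' : ℕ) : Prop :=
    ((([1,2,3,4,5,6] : List ℕ).rotate k).take m).toFinset =
      ((([1,3,6,5,2,4] : List ℕ).rotate k').take m').toFinset →
    2 ≤ ((([1,2,3,4,5,6] : List ℕ).rotate k).take m).toFinset.card →
    ((([1,2,3,4,5,6] : List ℕ).rotate k).take m).toFinset.card ≤ 4 →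
    (((([1,2,3,4,5,6] : List ℕ).rotate k).take m).toFinset = {5, 6} ∨
      ((([1,2,3,4,5,6] : List ℕ).rotate k).take m).toFinset = {1, 2, 3, 4})

instance (k m k' m' : ℕ) : Decidable (KeyP k m k' m') := by unfold KeyP; infer_instance

set_option maxRecDepth 10000 in
lemma key : ∀ k < 6, ∀ m < 7, ∀ k' < 6, ∀ m' < 7, KeyP k m k' m' := by decide

/-- For `α = (1,2,3,4,5,6)` and `β = (1,3,6,5,2,4)`: the only pair adjacent in both
cyclic orderings is `{5,6}`; after deleting `6`, the orderings `(1,2,3,4,5)` and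
`(1,3,5,2,4)` share no adjacent pair; hence `α` and `β` share no common planar
unrooted binary tree, i.e. `I(α,β) = 0`. -/
theorem intersection_zero_example :
    (∀ i j : ℕ, i ≠ j →
      (AdjPair [1, 2, 3, 4, 5, 6] i j ∧ AdjPair [1, 3, 6, 5, 2, 4] i j ↔
        (i = 5 ∧ j = 6) ∨ (i = 6 ∧ j = 5))) ∧
    (∀ i j : ℕ, i ≠ j →
      ¬ (AdjPair [1, 2, 3, 4, 5] i j ∧ AdjPair [1, 3, 5, 2, 4] i j)) ∧
    (∀ T : Finset (Finset ℕ), IsTreeSplits ({1, 2, 3, 4, 5, 6} : Finset ℕ) T →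
      ¬ (Planar [1, 2, 3, 4, 5, 6] T ∧ Planar [1, 3, 6, 5, 2, 4] T)) := by
  refine ⟨?_, ?_, ?_⟩
  · intro i j hij
    rw [adj_iff _ (by simp), adj_iff _ (by simp)]
    constructor
    · rintro ⟨h1, h2⟩
      have mi := (adj_mem _ _ _ h1).1
      have mj := (adj_mem _ _ _ h1).2
      simp only [List.mem_cons, List.not_mem_nil, or_false] at mi mj
      exact (part1_dec i (by omega) j (by omega) hij).1 ⟨h1, h2⟩
    · intro h
      rcases h with ⟨rfl, rfl⟩ | ⟨rfl, rfl⟩ <;>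
        exact (part1_dec _ (by omega) _ (by omega) hij).2 (by simp)
  · intro i j hij
    rw [adj_iff _ (by simp), adj_iff _ (by simp)]
    rintro ⟨h1, h2⟩
    have mi := (adj_mem _ _ _ h1).1
    have mj := (adj_mem _ _ _ h1).2
    simp only [List.mem_cons, List.not_mem_nil, or_false] at mi mj
    exact part2_dec i (by omega) j (by omega) hij ⟨h1, h2⟩
  · intro T hT ⟨hα, hβ⟩
    obtain ⟨hsub, _, _, hcard⟩ := hT
    have hL : ({1, 2, 3, 4, 5, 6} : Finset ℕ).card = 6 := by decide
    rw [hL] at hcard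
    have hss : T ⊆ ({{5, 6}, {1, 2, 3, 4}} : Finset (Finset ℕ)) := by
      intro A hA
      obtain ⟨_, h2, h4⟩ := hsub A hA
      rw [hL] at h4
      obtain ⟨k, hk, m, hm, hAeq⟩ := arc_bounded _ (by simp) A (hα A hA)
      obtain ⟨k', hk', m', hm', hBeq⟩ := arc_bounded _ (by simp) A (hβ A hA)
      simp only [List.length_cons, List.length_nil] at hk hm hk' hm'
      have hkey := key k (by omega) m (by omega) k' (by omega) m' (by omega)
        (hAeq.symm.trans hBeq) (hAeq ▸ h2) (by rw [← hAeq]; omega)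
      rw [← hAeq] at hkey
      simp only [Finset.mem_insert, Finset.mem_singleton]
      exact hkey
    have := Finset.card_le_card hss
    have h2 : ({{5, 6}, {1, 2, 3, 4}} : Finset (Finset ℕ)).card ≤ 2 :=
      le_trans (Finset.card_insert_le _ _) (by simp)
    omega
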